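/- Let X be uniformly distributed on the open unit disc, r ∈ (0,1), and Y = r - Re(1/(r - X)). Then for all t > r, P(Y > t) ≤ min(1, 1/(4(t-r)²)). -/

import Mathlib

open Real Complex MeasureTheory

/-- The uniform probability measure on the open unit disc in `ℂ`. -/
noncomputable def unifDisc : Measure ℂ :=
  (volume (Metric.ball (0 : ℂ) 1))⁻¹ • volume.restrict (Metric.ball (0 : ℂ) 1)

/-- For `X` uniform on the unit disc, `r ∈ (0,1)` and `Y = r - Re(1/(r - X))`:
for all `t > r`, `P(Y > t) ≤ min(1, 1/(4(t-r)²))`. -/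
theorem tail_bound_of_Y (r : ℝ) (hr0 : 0 < r) (hr1 : r < 1) (t : ℝ) (ht : r < t) :
    unifDisc {z : ℂ | r - (((r : ℂ) - z)⁻¹).re > t}
      ≤ ENNReal.ofReal (min 1 (1 / (4 * (t - r) ^ 2))) := by
  set s := t - r with hs
  have hs0 : 0 < s := sub_pos.mpr ht
  set ρ : ℝ := 1 / (2 * s) with hρ
  have hρ0 : 0 < ρ := by positivity
  -- the event is contained in a small ball
  have hsub : {z : ℂ | r - (((r : ℂ) - z)⁻¹).re > t}
      ⊆ Metric.ball ((r : ℂ) + (ρ : ℝ)) ρ := by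
    intro z hz
    simp only [Set.mem_setOf_eq] at hz
    have hre : (((r : ℂ) - z)⁻¹).re < -s := by
      simp only [hs]; linarith
    set w := (r : ℂ) - z with hw
    have hwne : w ≠ 0 := by
      intro h
      rw [h] at hre
      simp at hre
      linarith
    have hnorm : 0 < Complex.normSq w := Complex.normSq_pos.mpr hwne
    have h1 : w.re < -s * Complex.normSq w := by
      rw [Complex.inv_re] at hre
      calc w.re = w.re / Complex.normSq w * Complex.normSq w := by field_simp
        _ < -s * Complex.normSq w := mul_lt_mul_of_pos_right hre hnorm
    rw [Metric.mem_ball, dist_comm, Complex.dist_eq]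
    have hz' : (r : ℂ) + (ρ : ℝ) - z = w + (ρ : ℝ) := by rw [hw]; ring
    rw [hz']
    have hsq : ‖w + (ρ : ℝ)‖ ^ 2 < ρ ^ 2 := by
      rw [Complex.sq_norm, Complex.normSq_apply]
      simp only [Complex.add_re, Complex.add_im, Complex.ofReal_re, Complex.ofReal_im, add_zero]
      have hnsq : Complex.normSq w = w.re * w.re + w.im * w.im := Complex.normSq_apply w
      have hρs : ρ * s = 1 / 2 := by rw [hρ]; field_simp
      have h2 : 2 * ρ * w.re < -Complex.normSq w := by
        have h3 : 2 * ρ * (-s * Complex.normSq w) = -Complex.normSq w := by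
          linear_combination (-2 * Complex.normSq w) * hρs
        have h4 := mul_lt_mul_of_pos_left h1 (show (0:ℝ) < 2 * ρ by positivity)
        linarith
      nlinarith [h2, hnsq]
    exact lt_of_pow_lt_pow_left₀ 2 hρ0.le hsq
  have hBmeas : MeasurableSet (Metric.ball (0 : ℂ) 1) := measurableSet_ball
  have hvol : volume (Metric.ball (0 : ℂ) 1) = (NNReal.pi : ENNReal) := by
    rw [Complex.volume_ball]; simp
  have hπ0 : (NNReal.pi : ENNReal) ≠ 0 := by
    simp [NNReal.pi_ne_zero]
  have hπtop : (NNReal.pi : ENNReal) ≠ ⊤ := ENNReal.coe_ne_top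
  rw [unifDisc, Measure.smul_apply, smul_eq_mul, Measure.restrict_apply' hBmeas, hvol]
  have hmin : ENNReal.ofReal (min 1 (1 / (4 * s ^ 2)))
      = min (ENNReal.ofReal 1) (ENNReal.ofReal (1 / (4 * s ^ 2))) :=
    Monotone.map_min (fun _ _ h => ENNReal.ofReal_le_ofReal h)
  rw [hmin]
  refine le_min ?_ ?_
  · have h1 : volume ({z : ℂ | r - (((r : ℂ) - z)⁻¹).re > t} ∩ Metric.ball (0 : ℂ) 1)
        ≤ (NNReal.pi : ENNReal) := by
      rw [← hvol]; exact measure_mono Set.inter_subset_right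
    calc (NNReal.pi : ENNReal)⁻¹ * volume ({z : ℂ | r - (((r : ℂ) - z)⁻¹).re > t} ∩ Metric.ball (0 : ℂ) 1)
        ≤ (NNReal.pi : ENNReal)⁻¹ * (NNReal.pi : ENNReal) := mul_le_mul_right h1 _
      _ = 1 := ENNReal.inv_mul_cancel hπ0 hπtop
      _ = ENNReal.ofReal 1 := by simp
  · have h2 : volume ({z : ℂ | r - (((r : ℂ) - z)⁻¹).re > t} ∩ Metric.ball (0 : ℂ) 1)
        ≤ ENNReal.ofReal (ρ ^ 2) * (NNReal.pi : ENNReal) := by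
      calc volume ({z : ℂ | r - (((r : ℂ) - z)⁻¹).re > t} ∩ Metric.ball (0 : ℂ) 1)
          ≤ volume (Metric.ball ((r : ℂ) + (ρ : ℝ)) ρ) :=
            measure_mono (Set.inter_subset_left.trans hsub)
        _ = ENNReal.ofReal ρ ^ 2 * (NNReal.pi : ENNReal) := Complex.volume_ball _ _
        _ = ENNReal.ofReal (ρ ^ 2) * (NNReal.pi : ENNReal) := by
            rw [ENNReal.ofReal_pow hρ0.le]
    have hρ2 : ρ ^ 2 = 1 / (4 * s ^ 2) := by rw [hρ]; field_simp; ring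
    calc (NNReal.pi : ENNReal)⁻¹ * volume ({z : ℂ | r - (((r : ℂ) - z)⁻¹).re > t} ∩ Metric.ball (0 : ℂ) 1)
        ≤ (NNReal.pi : ENNReal)⁻¹ * (ENNReal.ofReal (ρ ^ 2) * (NNReal.pi : ENNReal)) :=
          mul_le_mul_right h2 _
      _ = ENNReal.ofReal (ρ ^ 2) := by
          rw [mul_comm (ENNReal.ofReal (ρ ^ 2)), ← mul_assoc,
            ENNReal.inv_mul_cancel hπ0 hπtop, one_mul]
      _ = ENNReal.ofReal (1 / (4 * s ^ 2)) := by rw [hρ2]
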